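/- For any two vectors v, w ∈ ℝ^d with ‖v‖ < ‖w‖ one has tan²(∠(v+w, w)) ≤ ‖v‖² / (‖w‖² − ‖v‖²), where ∠(v+w,w) is the angle between the lines spanned by v+w and w (note v + w ≠ 0 since ‖v‖ < ‖w‖). -/

import Mathlib

open Filter

noncomputable section

abbrev Euc (d : ℕ) := EuclideanSpace ℝ (Fin d)

/-- Angle between the lines spanned by two vectors. -/
noncomputable def vecAngle {d : ℕ} (v w : Euc d) : ℝ :=
  Real.arccos (|(inner ℝ v w : ℝ)| / (‖v‖ * ‖w‖))

/-- Largest principal angle between two subspaces of equal dimension. -/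
noncomputable def subAngle {d : ℕ} (V W : Submodule ℝ (Euc d)) : ℝ :=
  Real.arccos (sInf {c : ℝ | ∃ v ∈ V, ‖v‖ = 1 ∧
    c = sSup {r : ℝ | ∃ w ∈ W, ‖w‖ = 1 ∧ r = (inner ℝ v w : ℝ)}})

/-- For vectors `v, w ∈ ℝ^d` with `‖v‖ < ‖w‖`,
`tan²(∠(v+w,w)) ≤ ‖v‖² / (‖w‖² − ‖v‖²)`. -/
theorem tan_sq_vecAngle_add_le {d : ℕ} (v w : Euc d) (h : ‖v‖ < ‖w‖) :
    Real.tan (vecAngle (v + w) w) ^ 2 ≤ ‖v‖ ^ 2 / (‖w‖ ^ 2 - ‖v‖ ^ 2) := by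
  have hp : (0:ℝ) ≤ ‖v‖ := norm_nonneg v
  have hq : (0:ℝ) < ‖w‖ := lt_of_le_of_lt hp h
  set a : ℝ := inner ℝ v w with ha
  have hca : |a| ≤ ‖v‖ * ‖w‖ := abs_real_inner_le_norm v w
  have hia : (inner ℝ (v + w) w : ℝ) = a + ‖w‖ ^ 2 := by
    rw [inner_add_left, real_inner_self_eq_norm_sq]
  have haq : 0 < a + ‖w‖ ^ 2 := by
    have : -(‖v‖ * ‖w‖) ≤ a := neg_le_of_abs_le hca
    nlinarith
  have hc2 : ‖v + w‖ ^ 2 = ‖v‖ ^ 2 + 2 * a + ‖w‖ ^ 2 := by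
    rw [@norm_add_sq_real]
  have hcpos : 0 < ‖v + w‖ := by
    have : 0 < ‖v + w‖ ^ 2 := by
      nlinarith [neg_le_of_abs_le hca, sq_nonneg (‖v‖ - ‖w‖)]
    nlinarith [norm_nonneg (v + w)]
  set X : ℝ := |(inner ℝ (v + w) w : ℝ)| / (‖v + w‖ * ‖w‖) with hX
  have hXval : X = (a + ‖w‖ ^ 2) / (‖v + w‖ * ‖w‖) := by
    rw [hX, hia, abs_of_pos haq]
  have hXpos : 0 < X := by
    rw [hXval]; positivity
  have hX1 : X ≤ 1 := by
    rw [hX, div_le_one (by positivity)]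
    exact abs_real_inner_le_norm _ _
  have htan : Real.tan (vecAngle (v + w) w) = Real.sqrt (1 - X ^ 2) / X := by
    rw [vecAngle, Real.tan_arccos]
  have h1X2 : 0 ≤ 1 - X ^ 2 := by nlinarith
  have htan2 : Real.tan (vecAngle (v + w) w) ^ 2 = (1 - X ^ 2) / X ^ 2 := by
    rw [htan, div_pow, Real.sq_sqrt h1X2]
  rw [htan2]
  have hX2 : X ^ 2 = (a + ‖w‖ ^ 2) ^ 2 / (‖v + w‖ ^ 2 * ‖w‖ ^ 2) := by
    rw [hXval, div_pow]; ring_nf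
  rw [div_le_div_iff₀ (by positivity) (by nlinarith)]
  have key : (‖v + w‖ ^ 2 * ‖w‖ ^ 2 - (a + ‖w‖ ^ 2) ^ 2) * (‖w‖ ^ 2 - ‖v‖ ^ 2)
      ≤ ‖v‖ ^ 2 * (a + ‖w‖ ^ 2) ^ 2 := by
    rw [hc2]
    nlinarith [mul_nonneg (sq_nonneg ‖w‖) (sq_nonneg (a + ‖v‖ ^ 2))]
  have hden : (0:ℝ) < ‖v + w‖ ^ 2 * ‖w‖ ^ 2 := by positivity
  rw [hX2]
  have e1 : (1 - (a + ‖w‖ ^ 2) ^ 2 / (‖v + w‖ ^ 2 * ‖w‖ ^ 2)) * (‖w‖ ^ 2 - ‖v‖ ^ 2)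
      = (‖v + w‖ ^ 2 * ‖w‖ ^ 2 - (a + ‖w‖ ^ 2) ^ 2) * (‖w‖ ^ 2 - ‖v‖ ^ 2)
        / (‖v + w‖ ^ 2 * ‖w‖ ^ 2) := by
    field_simp
  have e2 : ‖v‖ ^ 2 * ((a + ‖w‖ ^ 2) ^ 2 / (‖v + w‖ ^ 2 * ‖w‖ ^ 2))
      = ‖v‖ ^ 2 * (a + ‖w‖ ^ 2) ^ 2 / (‖v + w‖ ^ 2 * ‖w‖ ^ 2) := by
    ring
  rw [e1, e2]
  exact div_le_div_of_nonneg_right key hden.le
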